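/- Let D = diag(d₁,…,d_r) with all d_i positive integers. A set of binomial generators of the lattice ideal I_L for L = D(L'), where L' = L_{βD} is a saturated lattice, is obtained from a set of binomial generators of the toric ideal I_{L'} by substituting x_i^{d_i} for x_i in each generator. In particular, m ∈ L' if and only if Dm ∈ L, and x^{m⁺} − x^{m⁻} ∈ I_{L'} if and only if x^{(Dm)⁺} − x^{(Dm)⁻} ∈ I_L. -/

import Mathlib

open MvPolynomial

/-- The exponent vector of the positive part `m⁺` of an integer vector. -/
noncomputable def expOf {r : ℕ} (m : Fin r → ℤ) : Fin r →₀ ℕ :=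
  Finsupp.equivFunOnFinite.symm fun i => (m i).toNat

/-- The binomial `F_m = x^{m⁺} - x^{m⁻}`. -/
noncomputable def latticeBinomial (K : Type*) [Field K] {r : ℕ} (m : Fin r → ℤ) :
    MvPolynomial (Fin r) K :=
  monomial (expOf m) 1 - monomial (expOf (-m)) 1

/-- The lattice ideal `I_L` of a lattice `L ⊆ ℤ^r`. -/
noncomputable def latticeIdeal (K : Type*) [Field K] {r : ℕ} (L : AddSubgroup (Fin r → ℤ)) :
    Ideal (MvPolynomial (Fin r) K) :=
  Ideal.span {f | ∃ m ∈ L, f = latticeBinomial K m}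

/-- Degree of a monomial exponent under the grading `β`. -/
def degOf {A : Type*} [AddCommGroup A] {r : ℕ} (β : (Fin r → ℤ) →+ A) (d : Fin r →₀ ℕ) : A :=
  β fun i => (d i : ℤ)

/-- `f` is homogeneous of degree `α` with respect to `β`. -/
def IsHomogOf {A : Type*} [AddCommGroup A] {K : Type*} [Field K] {r : ℕ}
    (β : (Fin r → ℤ) →+ A) (α : A) (f : MvPolynomial (Fin r) K) : Prop :=
  ∀ d ∈ f.support, degOf β d = α

/-- `f` is homogeneous with respect to `β`. -/
def IsHomog {A : Type*} [AddCommGroup A] {K : Type*} [Field K] {r : ℕ}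
    (β : (Fin r → ℤ) →+ A) (f : MvPolynomial (Fin r) K) : Prop :=
  ∃ α, IsHomogOf β α f

/-- An ideal is homogeneous if it is generated by homogeneous polynomials. -/
def IsHomogIdeal {A : Type*} [AddCommGroup A] {K : Type*} [Field K] {r : ℕ}
    (β : (Fin r → ℤ) →+ A) (I : Ideal (MvPolynomial (Fin r) K)) : Prop :=
  ∃ S : Set (MvPolynomial (Fin r) K), (∀ f ∈ S, IsHomog β f) ∧ I = Ideal.span S

/-- `x^m(P) = ∏ᵢ Pᵢ^{mᵢ}` as a unit. -/
def charEval {K : Type*} [Field K] {r : ℕ} (P : Fin r → Kˣ) (m : Fin r → ℤ) : Kˣ :=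
  ∏ i, (P i) ^ (m i)

/-- The group `G = Ker π`, consisting of the points where all characters coming
from `Ker β` take the value `1`. -/
def torusG {K : Type*} [Field K] {A : Type*} [AddCommGroup A] {r : ℕ}
    (β : (Fin r → ℤ) →+ A) : Subgroup (Fin r → Kˣ) where
  carrier := {g | ∀ m ∈ β.ker, charEval g m = 1}
  one_mem' := by intro m hm; simp [charEval]
  mul_mem' := by
    intro a b ha hb m hm
    have : charEval (a * b) m = charEval a m * charEval b m := by
      simp [charEval, mul_zpow, Finset.prod_mul_distrib]
    rw [this, ha m hm, hb m hm, one_mul]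
  inv_mem' := by
    intro a ha m hm
    have : charEval a⁻¹ m = (charEval a m)⁻¹ := by
      simp [charEval, inv_zpow]
    rw [this, ha m hm, inv_one]

/-- The vanishing ideal of a set of torus points, generated by the homogeneous
polynomials vanishing on it. -/
noncomputable def vanishingIdeal {K : Type*} [Field K] {A : Type*} [AddCommGroup A] {r : ℕ}
    (β : (Fin r → ℤ) →+ A) (Y : Set ((Fin r → Kˣ) ⧸ torusG (K := K) β)) :
    Ideal (MvPolynomial (Fin r) K) :=
  Ideal.span {f | IsHomog β f ∧
    ∀ P : Fin r → Kˣ, (QuotientGroup.mk P ∈ Y) → eval (fun i => (P i : K)) f = 0}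

/-- Height of an ideal: infimum of heights of primes containing it. -/
noncomputable def idealHeight {R : Type*} [CommRing R] (I : Ideal R) : ℕ∞ :=
  ⨅ (p : PrimeSpectrum R) (_ : I ≤ p.asIdeal), Order.height p

/-- A homogeneous ideal is a complete intersection if it is generated by a regular
sequence of homogeneous polynomials whose length is the height of the ideal. -/
def IsCompleteIntersection {K : Type*} [Field K] {A : Type*} [AddCommGroup A] {r : ℕ}
    (β : (Fin r → ℤ) →+ A) (I : Ideal (MvPolynomial (Fin r) K)) : Prop :=
  ∃ (k : ℕ) (f : Fin k → MvPolynomial (Fin r) K),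
    (∀ i, IsHomog β (f i)) ∧
    RingTheory.Sequence.IsRegular (MvPolynomial (Fin r) K) (List.ofFn f) ∧
    I = Ideal.span (Set.range f) ∧ (k : ℕ∞) = idealHeight I

/-- coercion `(Fin r →₀ ℕ) →+ (Fin r → ℤ)`. -/
def natToInt {r : ℕ} : (Fin r →₀ ℕ) →+ (Fin r → ℤ) where
  toFun s := fun i => (s i : ℤ)
  map_zero' := by funext i; simp
  map_add' a b := by funext i; simp

noncomputable def toQuot {r : ℕ} (M : AddSubgroup (Fin r → ℤ)) : (Fin r →₀ ℕ) →+ ((Fin r → ℤ) ⧸ M) :=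
  (QuotientAddGroup.mk' M).comp natToInt

lemma natToInt_expOf_sub {r : ℕ} (m : Fin r → ℤ) :
    natToInt (expOf m) - natToInt (expOf (-m)) = m := by
  funext i
  simp [natToInt, expOf, Int.toNat_sub_toNat_neg]

noncomputable def psiM (K : Type*) [Field K] {r : ℕ} (M : AddSubgroup (Fin r → ℤ)) :
    MvPolynomial (Fin r) K →+* AddMonoidAlgebra K ((Fin r → ℤ) ⧸ M) :=
  AddMonoidAlgebra.mapDomainRingHom K (toQuot M)

lemma psiM_monomial (K : Type*) [Field K] {r : ℕ} (M : AddSubgroup (Fin r → ℤ))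
    (s : Fin r →₀ ℕ) (c : K) :
    psiM K M (monomial s c) = AddMonoidAlgebra.single (toQuot M s) c := by
  rw [← single_eq_monomial]
  exact AddMonoidAlgebra.mapDomain_single

lemma binomial_mem_iff (K : Type*) [Field K] {r : ℕ} (M : AddSubgroup (Fin r → ℤ))
    (m : Fin r → ℤ) :
    latticeBinomial K m ∈ latticeIdeal K M ↔ m ∈ M := by
  constructor
  · intro h
    have hker : latticeIdeal K M ≤ RingHom.ker (psiM K M) := by
      rw [latticeIdeal, Ideal.span_le]
      rintro f ⟨n, hn, rfl⟩
      have : toQuot M (expOf n) = toQuot M (expOf (-n)) := by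
        simp only [toQuot, AddMonoidHom.comp_apply, QuotientAddGroup.mk'_apply,
          QuotientAddGroup.eq_iff_sub_mem, natToInt_expOf_sub]
        exact hn
      simp [RingHom.mem_ker, latticeBinomial, psiM_monomial, this]
    have h0 := hker h
    rw [RingHom.mem_ker, latticeBinomial, map_sub, psiM_monomial, psiM_monomial,
      sub_eq_zero] at h0
    have := (AddMonoidAlgebra.single_left_inj (one_ne_zero (α := K))).mp h0
    simpa only [toQuot, AddMonoidHom.comp_apply, QuotientAddGroup.mk'_apply,
      QuotientAddGroup.eq_iff_sub_mem, natToInt_expOf_sub] using this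
  · intro h
    exact Ideal.subset_span ⟨m, h, rfl⟩

/-- scaling of exponents by `d`. -/
noncomputable def scaleHom {r : ℕ} (d : Fin r → ℕ) : (Fin r →₀ ℕ) →+ (Fin r →₀ ℕ) where
  toFun s := Finsupp.equivFunOnFinite.symm fun i => d i * s i
  map_zero' := by ext i; simp
  map_add' a b := by ext i; simp [mul_add]

noncomputable def subPow (K : Type*) [Field K] {r : ℕ} (d : Fin r → ℕ) :
    MvPolynomial (Fin r) K →+* MvPolynomial (Fin r) K :=
  AddMonoidAlgebra.mapDomainRingHom K (scaleHom d)

lemma subPow_monomial (K : Type*) [Field K] {r : ℕ} (d : Fin r → ℕ) (s : Fin r →₀ ℕ) (c : K) :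
    subPow K d (monomial s c) = monomial (scaleHom d s) c := by
  rw [← single_eq_monomial, ← single_eq_monomial]
  exact AddMonoidAlgebra.mapDomain_single

lemma aeval_eq_subPow (K : Type*) [Field K] {r : ℕ} (d : Fin r → ℕ) (f : MvPolynomial (Fin r) K) :
    aeval (fun i => (X i : MvPolynomial (Fin r) K) ^ (d i)) f = subPow K d f := by
  have : (aeval (fun i => (X i : MvPolynomial (Fin r) K) ^ (d i))).toRingHom = subPow K d := by
    apply MvPolynomial.ringHom_ext
    · intro c
      simp only [AlgHom.toRingHom_eq_coe, RingHom.coe_coe, aeval_C, algebraMap_eq]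
      rw [← monomial_zero', subPow_monomial, map_zero, monomial_zero']
    · intro i
      simp only [AlgHom.toRingHom_eq_coe, RingHom.coe_coe, aeval_X]
      have hs : scaleHom d (Finsupp.single i (1 : ℕ)) = Finsupp.single i (d i) := by
        ext j
        rcases eq_or_ne i j with rfl | h
        · simp [scaleHom, Finsupp.single_apply]
        · simp [scaleHom, Finsupp.single_apply, h]
      rw [X_pow_eq_monomial, X, subPow_monomial, hs]
  exact congrFun (congrArg DFunLike.coe this) f

/-- The diagonal map `D = diag(d₁,…,d_r)` acting on `ℤ^r`. -/
def Dhom {r : ℕ} (d : Fin r → ℕ) : (Fin r → ℤ) →+ (Fin r → ℤ) where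
  toFun m := fun i => (d i : ℤ) * m i
  map_zero' := by funext i; simp
  map_add' a b := by funext i; simp [mul_add]

lemma Dhom_neg {r : ℕ} (d : Fin r → ℕ) (m : Fin r → ℤ) : Dhom d (-m) = -(Dhom d m) :=
  map_neg (Dhom d) m

lemma scaleHom_expOf {r : ℕ} (d : Fin r → ℕ) (m : Fin r → ℤ) :
    scaleHom d (expOf m) = expOf (Dhom d m) := by
  ext i
  show d i * (m i).toNat = ((d i : ℤ) * m i).toNat
  rcases le_or_gt 0 (m i) with h | h
  · obtain ⟨k, hk⟩ := Int.eq_ofNat_of_zero_le h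
    rw [hk,← Nat.cast_mul, Int.toNat_natCast, Int.toNat_natCast]
  · have h1 : (m i).toNat = 0 := Int.toNat_of_nonpos h.le
    have h2 : ((d i : ℤ) * m i).toNat = 0 :=
      Int.toNat_of_nonpos (mul_nonpos_of_nonneg_of_nonpos (by positivity) h.le)
    simp [h1, h2]

lemma subst_latticeBinomial (K : Type*) [Field K] {r : ℕ} (d : Fin r → ℕ) (m : Fin r → ℤ) :
    aeval (fun i => (X i : MvPolynomial (Fin r) K) ^ (d i)) (latticeBinomial K m) =
      latticeBinomial K (Dhom d m) := by
  rw [aeval_eq_subPow, latticeBinomial, latticeBinomial, map_sub, subPow_monomial,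
    subPow_monomial, scaleHom_expOf, scaleHom_expOf, Dhom_neg]

/-- for `L' = Ker(β∘D)` and `L = D(L')`, binomial generators of `I_L`
are obtained from binomial generators of `I_{L'}` by substituting `xᵢ^{dᵢ}` for
`xᵢ`; in particular `m ∈ L' ↔ Dm ∈ L` and `F_m ∈ I_{L'} ↔ F_{Dm} ∈ I_L`, and the
substitution sends `F_m` to `F_{Dm}`. -/
theorem stmt_12 {K : Type*} [Field K] {A : Type*} [AddCommGroup A] {r : ℕ}
    (β : (Fin r → ℤ) →+ A) (d : Fin r → ℕ) (hd : ∀ i, 0 < d i) :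
    (∀ m : Fin r → ℤ, m ∈ AddMonoidHom.ker (β.comp (Dhom d)) ↔
        Dhom d m ∈ AddSubgroup.map (Dhom d) (AddMonoidHom.ker (β.comp (Dhom d)))) ∧
    (∀ m : Fin r → ℤ,
        aeval (fun i => (X i : MvPolynomial (Fin r) K) ^ (d i)) (latticeBinomial K m) =
          latticeBinomial K (Dhom d m)) ∧
    (∀ m : Fin r → ℤ,
        latticeBinomial K m ∈ latticeIdeal K (AddMonoidHom.ker (β.comp (Dhom d))) ↔
        latticeBinomial K (Dhom d m) ∈
          latticeIdeal K (AddSubgroup.map (Dhom d) (AddMonoidHom.ker (β.comp (Dhom d))))) ∧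
    (∀ S' : Set (Fin r → ℤ), (∀ m ∈ S', m ∈ AddMonoidHom.ker (β.comp (Dhom d))) →
        latticeIdeal K (AddMonoidHom.ker (β.comp (Dhom d))) =
          Ideal.span ((latticeBinomial K) '' S') →
        latticeIdeal K (AddSubgroup.map (Dhom d) (AddMonoidHom.ker (β.comp (Dhom d)))) =
          Ideal.span ((fun m => latticeBinomial K (Dhom d m)) '' S')) := by
  classical
  set L' := AddMonoidHom.ker (β.comp (Dhom d)) with hL'
  set L := AddSubgroup.map (Dhom d) L' with hL
  have hDinj : Function.Injective (Dhom d) := by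
    intro a b hab
    funext i
    have := congrFun hab i
    exact mul_left_cancel₀ (by exact_mod_cast (hd i).ne') this
  have h1 : ∀ m : Fin r → ℤ, m ∈ L' ↔ Dhom d m ∈ L := by
    intro m
    constructor
    · intro hm; exact ⟨m, hm, rfl⟩
    · rintro ⟨m', hm', heq⟩
      rwa [← hDinj heq]
  refine ⟨h1, fun m => subst_latticeBinomial K d m, ?_, ?_⟩
  · intro m
    rw [binomial_mem_iff, binomial_mem_iff]
    exact h1 m
  · intro S' hS' hI
    apply le_antisymm
    · rw [latticeIdeal, Ideal.span_le]
      rintro f ⟨n, hn, rfl⟩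
      obtain ⟨m', hm', rfl⟩ := hn
      have hmem : latticeBinomial K m' ∈ latticeIdeal K L' :=
        Ideal.subset_span ⟨m', hm', rfl⟩
      rw [hI] at hmem
      have := Ideal.mem_map_of_mem
        (aeval (fun i => (X i : MvPolynomial (Fin r) K) ^ (d i))).toRingHom hmem
      rw [Ideal.map_span] at this
      have himg : (aeval (fun i => (X i : MvPolynomial (Fin r) K) ^ (d i))).toRingHom ''
          (latticeBinomial K '' S') = (fun m => latticeBinomial K (Dhom d m)) '' S' := by
        rw [Set.image_image]
        apply Set.image_congr
        intro a _
        exact subst_latticeBinomial K d a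
      rw [himg] at this
      have heq : (aeval (fun i => (X i : MvPolynomial (Fin r) K) ^ (d i))).toRingHom
          (latticeBinomial K m') = latticeBinomial K (Dhom d m') := subst_latticeBinomial K d m'
      rwa [heq] at this
    · rw [Ideal.span_le]
      rintro g ⟨m, hm, rfl⟩
      exact Ideal.subset_span ⟨Dhom d m, ⟨m, hS' m hm, rfl⟩, rfl⟩
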